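/- Let E, E', E'' be objects of a triangulated category D and t ∈ ℝ. Then δ_t(E, E' ⊕ E'') ≤ δ_t(E,E') + δ_t(E,E'') (inequality in [0,∞]). -/

import Mathlib

open CategoryTheory CategoryTheory.Limits CategoryTheory.Pretriangulated Filter
open scoped ENNReal

universe v₁ v₂ u₁ u₂

variable {D : Type u₁} [Category.{v₁} D] [Preadditive D] [HasZeroObject D]
  [HasShift D ℤ] [∀ n : ℤ, (shiftFunctor D n).Additive] [Pretriangulated D]

/-- An object `F` admits a cone decomposition with the given list of components. -/
inductive ConeDecomp : D → List D → Prop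
  | nil {F : D} (h : IsZero F) : ConeDecomp F []
  | step {X : D} (F : D) {l : List D} (A : D) (hX : ConeDecomp X l)
      (f : X ⟶ F) (g : F ⟶ A) (h : A ⟶ X⟦(1 : ℤ)⟧)
      (ht : Triangle.mk f g h ∈ distTriang D) : ConeDecomp F (l ++ [A])

open scoped Classical in
/-- The categorical complexity `δ_t(E,F)`. -/
noncomputable def catDelta [HasBinaryBiproducts D] (t : ℝ) (E F : D) : ℝ≥0∞ :=
  if IsZero F then 0
  else sInf {x : ℝ≥0∞ | ∃ (ns : List ℤ) (F' : D),
      ns ≠ [] ∧ ConeDecomp (F ⊞ F') (ns.map fun n => E⟦n⟧) ∧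
      x = (ns.map fun n => ENNReal.ofReal (Real.exp ((n : ℝ) * t))).sum}

/-- Objects split-generated by `G`. -/
inductive SplitGen (G : D) : D → Prop
  | self : SplitGen G G
  | zero {X : D} (h : IsZero X) : SplitGen G X
  | ofIso {X Y : D} (e : X ≅ Y) (h : SplitGen G X) : SplitGen G Y
  | shift {X : D} (n : ℤ) (h : SplitGen G X) : SplitGen G (X⟦n⟧)
  | cone₂ {X Y Z : D} (f : X ⟶ Y) (g : Y ⟶ Z) (h : Z ⟶ X⟦(1 : ℤ)⟧)
      (ht : Triangle.mk f g h ∈ distTriang D) (hX : SplitGen G X) (hZ : SplitGen G Z) :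
      SplitGen G Y
  | summand {X Y : D} (s : X ⟶ Y) (p : Y ⟶ X) (hsp : s ≫ p = 𝟙 X)
      (h : SplitGen G Y) : SplitGen G X

/-- `G` is a split-generator. -/
def IsSplitGenerator (G : D) : Prop := ∀ X : D, SplitGen G X



/-- The binary biproduct as a pi over `WalkingPair`. -/
noncomputable def piPairIso (f : WalkingPair → D) [HasProduct f] :
    f WalkingPair.left ⊞ f WalkingPair.right ≅ ∏ᶜ f where
  hom := Pi.lift (fun j => match j with
    | WalkingPair.left => biprod.fst
    | WalkingPair.right => biprod.snd)
  inv := biprod.lift (Pi.π f WalkingPair.left) (Pi.π f WalkingPair.right)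
  hom_inv_id := by ext <;> simp
  inv_hom_id := by
    apply limit.hom_ext
    rintro ⟨_ | _⟩ <;> simp

lemma biprodTriangle_distinguished (T₁ T₂ : Triangle D)
    (h₁ : T₁ ∈ distTriang D) (h₂ : T₂ ∈ distTriang D) :
    Triangle.mk (biprod.map T₁.mor₁ T₂.mor₁) (biprod.map T₁.mor₂ T₂.mor₂)
      (biprod.desc (T₁.mor₃ ≫ (shiftFunctor D (1 : ℤ)).map biprod.inl)
        (T₂.mor₃ ≫ (shiftFunctor D (1 : ℤ)).map biprod.inr)) ∈ distTriang D := by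
  let T : WalkingPair → Triangle D := fun j => match j with
    | WalkingPair.left => T₁
    | WalkingPair.right => T₂
  have hT : ∀ j, T j ∈ distTriang D := by rintro (_ | _) <;> assumption
  have hprod := productTriangle_distinguished T hT
  refine isomorphic_distinguished _ hprod _ ?_
  refine Triangle.isoMk _ _ (piPairIso (fun j => (T j).obj₁))
    (piPairIso (fun j => (T j).obj₂)) (piPairIso (fun j => (T j).obj₃)) ?_ ?_ ?_
  · dsimp [Triangle.mk, productTriangle]
    apply limit.hom_ext
    rintro ⟨_ | _⟩ <;> simp [piPairIso, T]
  · dsimp [Triangle.mk, productTriangle]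
    apply limit.hom_ext
    rintro ⟨_ | _⟩ <;> simp [piPairIso, T]
  · dsimp [Triangle.mk, productTriangle]
    rw [← cancel_mono (piComparison (shiftFunctor D (1 : ℤ)) (fun j => (T j).obj₁))]
    dsimp [piPairIso]
    rw [Category.assoc, Category.assoc, Category.assoc, IsIso.inv_hom_id, Category.comp_id,
      map_lift_piComparison]
    apply limit.hom_ext
    rintro ⟨_ | _⟩ <;> ext <;> simp [T, ← Functor.map_comp]

/-- If `Y` is zero then `X ≅ X ⊞ Y`. -/
noncomputable def biprodIsoOfIsZeroRight {Y : D} (X : D) (h : IsZero Y) : X ≅ X ⊞ Y where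
  hom := biprod.inl
  inv := biprod.fst
  hom_inv_id := by simp
  inv_hom_id := by
    ext <;> first | apply h.eq_of_src | apply h.eq_of_tgt | simp

/-- If `X` is zero then `Y ≅ X ⊞ Y`. -/
noncomputable def biprodIsoOfIsZeroLeft {X : D} (Y : D) (h : IsZero X) : Y ≅ X ⊞ Y where
  hom := biprod.inr
  inv := biprod.snd
  hom_inv_id := by simp
  inv_hom_id := by
    ext <;> first | apply h.eq_of_src | apply h.eq_of_tgt | simp

/-- Interchange iso for biproducts. -/
noncomputable def biprodInterchange (A B C E : D) : (A ⊞ B) ⊞ (C ⊞ E) ≅ (A ⊞ C) ⊞ (B ⊞ E) where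
  hom := biprod.lift
    (biprod.lift (biprod.fst ≫ biprod.fst) (biprod.snd ≫ biprod.fst))
    (biprod.lift (biprod.fst ≫ biprod.snd) (biprod.snd ≫ biprod.snd))
  inv := biprod.lift
    (biprod.lift (biprod.fst ≫ biprod.fst) (biprod.snd ≫ biprod.fst))
    (biprod.lift (biprod.fst ≫ biprod.snd) (biprod.snd ≫ biprod.snd))
  hom_inv_id := by ext <;> simp
  inv_hom_id := by ext <;> simp


lemma cone_biprod_left {X Z Y A : D} (f : Z ⟶ Y) (g : Y ⟶ A) (h : A ⟶ Z⟦(1 : ℤ)⟧)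
    (ht : Triangle.mk f g h ∈ distTriang D) :
    Triangle.mk (biprod.map (𝟙 X) f) (biprod.snd ≫ g)
      (h ≫ (shiftFunctor D (1 : ℤ)).map biprod.inr) ∈ distTriang D := by
  have hd := biprodTriangle_distinguished (contractibleTriangle X) (Triangle.mk f g h)
    (contractible_distinguished X) ht
  refine isomorphic_distinguished _ hd _ ?_
  refine Triangle.isoMk _ _ (Iso.refl _) (Iso.refl _)
    (biprodIsoOfIsZeroLeft A (isZero_zero D)) ?_ ?_ ?_
  · dsimp [Triangle.mk, contractibleTriangle]
    simp
  · dsimp [Triangle.mk, contractibleTriangle]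
    apply biprod.hom_ext'
    · apply biprod.hom_ext
      · apply (isZero_zero D).eq_of_tgt
      · simp [contractibleTriangle, biprodIsoOfIsZeroLeft]; erw [biprod.map_snd]; simp
    · apply biprod.hom_ext
      · apply (isZero_zero D).eq_of_tgt
      · simp [contractibleTriangle, biprodIsoOfIsZeroLeft]; erw [biprod.map_snd]; simp
  · dsimp [Triangle.mk, contractibleTriangle]
    simp [contractibleTriangle, biprodIsoOfIsZeroLeft]



lemma ConeDecomp.ofIso {F G : D} {l : List D} (e : F ≅ G) (h : ConeDecomp F l) :
    ConeDecomp G l := by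
  cases h with
  | nil h => exact .nil (h.of_iso e.symm)
  | step F A hX f g hc ht =>
      refine .step G A hX (f ≫ e.hom) (e.inv ≫ g) hc ?_
      refine isomorphic_distinguished _ ht _ ?_
      exact Triangle.isoMk _ _ (Iso.refl _) e.symm (Iso.refl _) (by simp [Triangle.mk]) (by simp [Triangle.mk]) (by simp [Triangle.mk])

lemma ConeDecomp.biprod {X Y : D} {l m : List D} (hX : ConeDecomp X l) (hY : ConeDecomp Y m) :
    ConeDecomp (X ⊞ Y) (l ++ m) := by
  induction hY with
  | nil h =>
      rw [List.append_nil]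
      exact hX.ofIso (biprodIsoOfIsZeroRight X h)
  | @step Z F m' A hZ f g hc ht ih =>
      rw [← List.append_assoc]
      exact .step (X ⊞ F) A ih (biprod.map (𝟙 X) f) (biprod.snd ≫ g)
        (hc ≫ (shiftFunctor D (1 : ℤ)).map biprod.inr) (cone_biprod_left f g hc ht)


/-- Lemma 2.2(2): `δ_t(E, E' ⊕ E'') ≤ δ_t(E,E') + δ_t(E,E'')`. -/
theorem catDelta_biprod_le [HasBinaryBiproducts D] (E E' E'' : D) (t : ℝ) :
    catDelta t E (E' ⊞ E'') ≤ catDelta t E E' + catDelta t E E'' := by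
  classical
  by_cases h0 : IsZero (E' ⊞ E'')
  · unfold catDelta
    rw [if_pos h0]
    exact zero_le
  by_cases h1 : IsZero E'
  · by_cases h2 : IsZero E''
    · exact absurd (h2.of_iso (biprodIsoOfIsZeroLeft E'' h1).symm) h0
    · unfold catDelta
      rw [if_pos h1, if_neg h0, if_neg h2, zero_add]
      apply sInf_le_sInf
      rintro x ⟨ns, F', hne, hdec, rfl⟩
      exact ⟨ns, F', hne,
        hdec.ofIso (biprod.mapIso (biprodIsoOfIsZeroLeft E'' h1) (Iso.refl F')), rfl⟩
  · by_cases h2 : IsZero E''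
    · unfold catDelta
      rw [if_pos h2, if_neg h0, if_neg h1, add_zero]
      apply sInf_le_sInf
      rintro x ⟨ns, F', hne, hdec, rfl⟩
      exact ⟨ns, F', hne,
        hdec.ofIso (biprod.mapIso (biprodIsoOfIsZeroRight E' h2) (Iso.refl F')), rfl⟩
    · unfold catDelta
      rw [if_neg h0, if_neg h1, if_neg h2]
      have key : ∀ a ∈ {x : ℝ≥0∞ | ∃ (ns : List ℤ) (F' : D),
            ns ≠ [] ∧ ConeDecomp (E' ⊞ F') (ns.map fun n => E⟦n⟧) ∧
            x = (ns.map fun n => ENNReal.ofReal (Real.exp ((n : ℝ) * t))).sum},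
          ∀ b ∈ {x : ℝ≥0∞ | ∃ (ns : List ℤ) (F' : D),
            ns ≠ [] ∧ ConeDecomp (E'' ⊞ F') (ns.map fun n => E⟦n⟧) ∧
            x = (ns.map fun n => ENNReal.ofReal (Real.exp ((n : ℝ) * t))).sum},
          sInf {x : ℝ≥0∞ | ∃ (ns : List ℤ) (F' : D),
            ns ≠ [] ∧ ConeDecomp ((E' ⊞ E'') ⊞ F') (ns.map fun n => E⟦n⟧) ∧
            x = (ns.map fun n => ENNReal.ofReal (Real.exp ((n : ℝ) * t))).sum} ≤ a + b := by
        rintro a ⟨ns₁, F₁, hne₁, hd₁, rfl⟩ b ⟨ns₂, F₂, hne₂, hd₂, rfl⟩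
        apply sInf_le
        refine ⟨ns₁ ++ ns₂, F₁ ⊞ F₂, by simp [hne₁], ?_, ?_⟩
        · have := (hd₁.biprod hd₂).ofIso (biprodInterchange E' F₁ E'' F₂)
          simpa [List.map_append] using this
        · simp [List.map_append, List.sum_append]
      rw [ENNReal.sInf_add]
      refine le_iInf₂ fun a ha => ?_
      conv_rhs => rw [sInf_eq_iInf']
      rw [ENNReal.add_iInf]
      exact le_iInf fun b => key a ha b b.2
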